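/- arXiv:2108.07427 — 2 statements merged into one kernel-verified Lean document; each statement's English description precedes it below -/
import Mathlib

section
/- Let f_1, …, f_t be idempotents of FG with f̄_k = f_k for all k, f_k·f_l = 0 for all k ≠ l, and f_1 + ⋯ + f_t = 1. Then an FG-submodule C of (FG)² is self-orthogonal if and only if for each k = 1, …, t the component f_k C = {f_k·c : c ∈ C} is self-orthogonal, i.e., ⟨u, v⟩ = 0 for all u, v ∈ f_k C. -/
open scoped Classical

noncomputable section

/-- The "bar" map on the group algebra: `Σ aₓ x ↦ Σ aₓ x⁻¹`. -/
def bar {F : Type} [Field F] {G : Type} [CommGroup G] (a : MonoidAlgebra F G) :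
    MonoidAlgebra F G :=
  MonoidAlgebra.ofCoeff (Finsupp.mapDomain (fun x => x⁻¹) a.coeff)

/-- The euclidean inner product on the group algebra. -/
def inn {F : Type} [Field F] {G : Type} [CommGroup G] [Fintype G]
    (a b : MonoidAlgebra F G) : F :=
  ∑ x : G, a.coeff x * b.coeff x

/-- The euclidean inner product on `(FG)²`. -/
def inn2 {F : Type} [Field F] {G : Type} [CommGroup G] [Fintype G]
    (u v : MonoidAlgebra F G × MonoidAlgebra F G) : F :=
  inn u.1 v.1 + inn u.2 v.2

/-- The Hamming weight of an element of `(FG)²` (number of nonzero coordinates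
among its `2n` coordinates). -/
def wt {F : Type} [Field F] {G : Type} [CommGroup G] [Fintype G]
    (u : MonoidAlgebra F G × MonoidAlgebra F G) : ℕ :=
  (Finset.univ.filter fun x : G => u.1.coeff x ≠ 0).card +
    (Finset.univ.filter fun x : G => u.2.coeff x ≠ 0).card

/-- The 2-quasi-abelian code generated by `(a,b)`: `C_{a,b} = {(ua, ub) : u ∈ FG}`. -/
def code {F : Type} [Field F] {G : Type} [CommGroup G]
    (a b : MonoidAlgebra F G) :
    Submodule (MonoidAlgebra F G) (MonoidAlgebra F G × MonoidAlgebra F G) :=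
  LinearMap.range
    ((LinearMap.mulRight (MonoidAlgebra F G) a).prod
      (LinearMap.mulRight (MonoidAlgebra F G) b))

/-- The dual (orthogonal complement) of a `2`-quasi-abelian code, as a set. -/
def dualSet {F : Type} [Field F] {G : Type} [CommGroup G] [Fintype G]
    (C : Submodule (MonoidAlgebra F G) (MonoidAlgebra F G × MonoidAlgebra F G)) :
    Set (MonoidAlgebra F G × MonoidAlgebra F G) :=
  {v | ∀ c ∈ C, inn2 v c = 0}

/-- A `2`-quasi-abelian code is self-dual if it equals its orthogonal complement. -/
def IsSelfDualCode {F : Type} [Field F] {G : Type} [CommGroup G] [Fintype G]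
    (C : Submodule (MonoidAlgebra F G) (MonoidAlgebra F G × MonoidAlgebra F G)) : Prop :=
  (C : Set (MonoidAlgebra F G × MonoidAlgebra F G)) = dualSet C

/-- A `2`-quasi-abelian code is self-orthogonal if `⟨u,v⟩ = 0` for all `u, v` in it. -/
def IsSelfOrthCode {F : Type} [Field F] {G : Type} [CommGroup G] [Fintype G]
    (C : Submodule (MonoidAlgebra F G) (MonoidAlgebra F G × MonoidAlgebra F G)) : Prop :=
  ∀ u ∈ C, ∀ v ∈ C, inn2 u v = 0

/-- The minimum Hamming weight of the nonzero elements of a code. -/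
def minwt {F : Type} [Field F] {G : Type} [CommGroup G] [Fintype G]
    (C : Submodule (MonoidAlgebra F G) (MonoidAlgebra F G × MonoidAlgebra F G)) : ℕ :=
  sInf {k | ∃ v ∈ C, v ≠ 0 ∧ wt v = k}

/-- `μ_q(n)`: the minimal size of a nontrivial `q`-cyclotomic coset of `ℤ/nℤ`. -/
def mu (q n : ℕ) : ℕ :=
  sInf {k | ∃ a : ZMod n, a ≠ 0 ∧
    k = Nat.card {b : ZMod n | ∃ j : ℕ, b = a * (q : ZMod n) ^ j}}

/-- The `q`-entropy function. -/
def entropy (q : ℕ) (δ : ℝ) : ℝ :=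
  δ * Real.logb q (q - 1) - δ * Real.logb q δ - (1 - δ) * Real.logb q (1 - δ)

/-- A primitive idempotent of a commutative ring. -/
def IsPrimIdem {A : Type} [CommRing A] (e : A) : Prop :=
  IsIdempotentElem e ∧ e ≠ 0 ∧
    ¬ ∃ e' e'' : A, IsIdempotentElem e' ∧ IsIdempotentElem e'' ∧
      e' ≠ 0 ∧ e'' ≠ 0 ∧ e' * e'' = 0 ∧ e = e' + e''

/-- The principal idempotent `e₀ = n⁻¹ Σ_{x∈G} x`. -/
def eZero (F : Type) [Field F] (G : Type) [CommGroup G] [Fintype G] : MonoidAlgebra F G :=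
  ((Fintype.card G : F)⁻¹) • ∑ x : G, MonoidAlgebra.single x (1 : F)

/-- `F`-dimension of an `FG`-submodule of `(FG)²`. -/
def fdim2 (F : Type) [Field F] {G : Type} [CommGroup G]
    (C : Submodule (MonoidAlgebra F G) (MonoidAlgebra F G × MonoidAlgebra F G)) : ℕ :=
  Module.finrank F (Submodule.restrictScalars F C)

/-- `F`-dimension of an ideal of `FG`. -/
def fdim (F : Type) [Field F] {G : Type} [CommGroup G]
    (A : Ideal (MonoidAlgebra F G)) : ℕ :=
  Module.finrank F (Submodule.restrictScalars F A)


lemma mul_apply_fin {F : Type} [Field F] {G : Type} [CommGroup G] [Fintype G]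
    (a b : MonoidAlgebra F G) (x : G) :
    (a * b).coeff x = ∑ y : G, a.coeff y * b.coeff (y⁻¹ * x) := by
  classical
  rw [MonoidAlgebra.coeff_mul]
  rw [Finsupp.sum_fintype _ _ (by intro y; simp)]
  refine Finset.sum_congr rfl fun y _ => ?_
  rw [Finsupp.sum_fintype _ _ (by intro z; simp)]
  rw [Finset.sum_eq_single (y⁻¹ * x)]
  · simp
  · intro z _ hz
    rw [if_neg]
    intro h
    exact hz (by rw [← h]; group)
  · intro h; exact absurd (Finset.mem_univ _) h

lemma bar_apply {F : Type} [Field F] {G : Type} [CommGroup G]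
    (a : MonoidAlgebra F G) (x : G) : (bar a).coeff x = a.coeff x⁻¹ := by
  unfold bar
  rw [MonoidAlgebra.coeff_ofCoeff]
  have := Finsupp.mapDomain_apply (f := fun x : G => x⁻¹)
    (fun u v h => inv_injective h) a.coeff x⁻¹
  simpa using this

lemma inn_adjoint {F : Type} [Field F] {G : Type} [CommGroup G] [Fintype G]
    (a c d : MonoidAlgebra F G) : inn (a * c) d = inn c (bar a * d) := by
  classical
  unfold inn
  simp only [mul_apply_fin, bar_apply, Finset.sum_mul, Finset.mul_sum]
  rw [Finset.sum_comm]
  conv_rhs => rw [Finset.sum_comm]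
  rw [← Equiv.sum_comp (Equiv.inv G)
    (fun y => ∑ x : G, c.coeff x * (a.coeff y⁻¹ * d.coeff (y⁻¹ * x)))]
  refine Finset.sum_congr rfl fun y _ => ?_
  simp only [Equiv.inv_apply, inv_inv]
  rw [← Equiv.sum_comp (Equiv.mulLeft y⁻¹) (fun x => c.coeff x * (a.coeff y * d.coeff (y * x)))]
  refine Finset.sum_congr rfl fun x _ => ?_
  simp only [Equiv.coe_mulLeft]
  rw [mul_inv_cancel_left]
  ring

lemma inn2_adjoint {F : Type} [Field F] {G : Type} [CommGroup G] [Fintype G]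
    (a : MonoidAlgebra F G) (u v : MonoidAlgebra F G × MonoidAlgebra F G) :
    inn2 (a • u) v = inn2 u (bar a • v) := by
  simp only [inn2, Prod.smul_fst, Prod.smul_snd, smul_eq_mul]
  rw [inn_adjoint, inn_adjoint]

lemma inn2_add_left {F : Type} [Field F] {G : Type} [CommGroup G] [Fintype G]
    (u w v : MonoidAlgebra F G × MonoidAlgebra F G) :
    inn2 (u + w) v = inn2 u v + inn2 w v := by
  have hadd : ∀ (a b : MonoidAlgebra F G) (x : G), (a + b).coeff x = a.coeff x + b.coeff x :=
    fun a b x => Finsupp.add_apply a.coeff b.coeff x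
  simp only [inn2, inn, Prod.fst_add, Prod.snd_add, hadd, add_mul,
    Finset.sum_add_distrib]
  ring

lemma inn2_sum_left {F : Type} [Field F] {G : Type} [CommGroup G] [Fintype G]
    {ι : Type} (s : Finset ι) (w : ι → MonoidAlgebra F G × MonoidAlgebra F G)
    (v : MonoidAlgebra F G × MonoidAlgebra F G) :
    inn2 (∑ k ∈ s, w k) v = ∑ k ∈ s, inn2 (w k) v := by
  classical
  induction s using Finset.induction with
  | empty => simp [inn2, inn]
  | insert _ _ h ih =>
      rw [Finset.sum_insert h, Finset.sum_insert h, inn2_add_left, ih]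

/-- For idempotents `f₁, …, f_t` with `f̄ₖ = fₖ`, `fₖ·fₗ = 0` (`k ≠ l`) and
`Σ fₖ = 1`, an `FG`-submodule `C ≤ (FG)²` is self-orthogonal iff each component
`fₖ C` is self-orthogonal. -/
theorem stmt_14 (F : Type) [Field F] [Fintype F] (G : Type) [CommGroup G] [Fintype G]
    (hn : 1 < Fintype.card G) (hodd : Odd (Fintype.card G))
    (hcop : Nat.Coprime (Fintype.card G) (Fintype.card F))
    (t : ℕ) (f : Fin t → MonoidAlgebra F G)
    (hidem : ∀ k, IsIdempotentElem (f k)) (hbar : ∀ k, bar (f k) = f k)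
    (horth : ∀ k l, k ≠ l → f k * f l = 0) (hsum : ∑ k, f k = 1)
    (C : Submodule (MonoidAlgebra F G) (MonoidAlgebra F G × MonoidAlgebra F G)) :
    IsSelfOrthCode C ↔
      ∀ k, ∀ u ∈ C, ∀ v ∈ C, inn2 (f k • u) (f k • v) = 0 := by
  constructor
  · intro h k u hu v hv
    exact h _ (C.smul_mem _ hu) _ (C.smul_mem _ hv)
  · intro h u hu v hv
    have hukey : u = ∑ k, f k • u := by
      rw [← Finset.sum_smul, hsum, one_smul]
    calc inn2 u v = inn2 (∑ k, f k • u) v := by rw [← hukey]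
    _ = ∑ k, inn2 (f k • u) v := inn2_sum_left _ _ _
    _ = ∑ k, inn2 (f k • u) (f k • v) := by
        refine Finset.sum_congr rfl fun k _ => ?_
        conv_lhs => rw [← (hidem k), mul_smul, inn2_adjoint, hbar]
    _ = 0 := by
        refine Finset.sum_eq_zero fun k _ => h k u hu v hv

end
end

section
/- Let e be a primitive idempotent of FG with ē ≠ e. Then the number of elements β ∈ FGe + FGē satisfying β·β̄ = −(e + ē) equals q^{k} − 1, where k = dim_F FGe. -/
open scoped Classical

noncomputable section

section AuxBar

variable {F : Type} [Field F] {G : Type} [CommGroup G]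

lemma bar_zero' : bar (0 : MonoidAlgebra F G) = 0 := MonoidAlgebra.mapDomain_zero _

lemma bar_add' (a b : MonoidAlgebra F G) : bar (a + b) = bar a + bar b :=
  MonoidAlgebra.mapDomain_add _ a b

lemma bar_bar' (a : MonoidAlgebra F G) : bar (bar a) = a := by
  have h : ((fun x : G => x⁻¹) ∘ fun x : G => x⁻¹) = id := funext fun x => inv_inv x
  unfold bar
  rw [MonoidAlgebra.coeff_ofCoeff, ← Finsupp.mapDomain_comp, h, Finsupp.mapDomain_id]

lemma bar_mul' (a b : MonoidAlgebra F G) : bar (a * b) = bar a * bar b := by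
  exact
    MonoidAlgebra.mapDomain_mul (invMonoidHom : G →* G) a b

lemma bar_neg' (a : MonoidAlgebra F G) : bar (-a) = -bar a := by
  have h : bar a + bar (-a) = 0 := by
    rw [← bar_add', add_neg_cancel, bar_zero']
  exact eq_neg_of_add_eq_zero_right h

lemma bar_inj' {a b : MonoidAlgebra F G} (h : bar a = bar b) : a = b := by
  rw [← bar_bar' a, h, bar_bar' b]

/-- A nonzero idempotent below a primitive idempotent equals it. -/
lemma prim_eats {A : Type} [CommRing A] {E g : A} (hE : IsPrimIdem E)
    (hg : IsIdempotentElem g) (hgE : g * E = g) (hg0 : g ≠ 0) : g = E := by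
  obtain ⟨hEi, hE0, hEprim⟩ := hE
  by_contra hne
  apply hEprim
  have hEg : E * g = g := by rw [mul_comm]; exact hgE
  refine ⟨g, E - g, hg, ?_, hg0, ?_, ?_, by ring⟩
  · show (E - g) * (E - g) = E - g
    calc (E - g) * (E - g) = E * E - E * g - g * E + g * g := by ring
      _ = E - g - g + g := by rw [hEi, hEg, hgE, hg]
      _ = E - g := by ring
  · intro h
    exact hne (sub_eq_zero.mp h).symm
  · calc g * (E - g) = g * E - g * g := by ring
      _ = g - g := by rw [hgE, hg]
      _ = 0 := sub_self g

end AuxBar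

/-- For a primitive idempotent `e` with `ē ≠ e`, the number of
`β ∈ FGe + FGē` with `β·β̄ = -(e + ē)` equals `q^k - 1`, where `k = dim_F FGe`. -/
theorem stmt_16 (F : Type) [Field F] [Fintype F] (G : Type) [CommGroup G] [Fintype G]
    (hn : 1 < Fintype.card G) (hodd : Odd (Fintype.card G))
    (hcop : Nat.Coprime (Fintype.card G) (Fintype.card F))
    (e : MonoidAlgebra F G) (he : IsPrimIdem e) (hbar : bar e ≠ e) :
    Nat.card {β : MonoidAlgebra F G |
        β ∈ Ideal.span {e} ⊔ Ideal.span {bar e} ∧ β * bar β = -(e + bar e)} =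
      Fintype.card F ^ (fdim F (Ideal.span {e})) - 1 := by
  classical
  obtain ⟨hie, hne, hprim⟩ := id he
  -- basic facts about `bar e`
  have hif : IsIdempotentElem (bar e) := by
    show bar e * bar e = bar e
    rw [← bar_mul', hie]
  have hbar0 : bar e ≠ 0 := fun h => hne (by rw [← bar_bar' e, h, bar_zero'])
  have hbarPrim : IsPrimIdem (bar e) := by
    refine ⟨hif, hbar0, ?_⟩
    rintro ⟨a, b, ha, hb, ha0, hb0, hab, heq⟩
    apply hprim
    refine ⟨bar a, bar b, ?_, ?_, ?_, ?_, ?_, ?_⟩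
    · show bar a * bar a = bar a; rw [← bar_mul', ha]
    · show bar b * bar b = bar b; rw [← bar_mul', hb]
    · exact fun h => ha0 (bar_inj' (by rw [h, bar_zero']))
    · exact fun h => hb0 (bar_inj' (by rw [h, bar_zero']))
    · rw [← bar_mul', hab, bar_zero']
    · rw [← bar_bar' e, heq, bar_add']
  -- orthogonality
  have horth : e * bar e = 0 := by
    by_contra hg0
    have hgi : IsIdempotentElem (e * bar e) := by
      show e * bar e * (e * bar e) = e * bar e
      calc e * bar e * (e * bar e) = (e * e) * (bar e * bar e) := by ring
        _ = e * bar e := by rw [hie, hif]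
    have h1 : e * bar e = e := prim_eats he hgi
      (by calc e * bar e * e = (e * e) * bar e := by ring
            _ = e * bar e := by rw [hie]) hg0
    have h2 : e * bar e = bar e := prim_eats hbarPrim hgi
      (by calc e * bar e * bar e = e * (bar e * bar e) := by ring
            _ = e * bar e := by rw [hif]) hg0
    exact hbar (h2.symm.trans h1)
  -- semisimplicity via Maschke
  have hp : (ringChar F).Prime := CharP.char_is_prime F (ringChar F)
  haveI : Fact (ringChar F).Prime := ⟨hp⟩
  have hdvdF : ringChar F ∣ Fintype.card F :=
    (prime_dvd_char_iff_dvd_card (ringChar F)).mp dvd_rfl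
  have hnd : ¬ ringChar F ∣ Fintype.card G := by
    intro h
    have := Nat.dvd_gcd h hdvdF
    rw [Nat.Coprime] at hcop
    rw [hcop] at this
    exact hp.one_lt.ne' (Nat.dvd_one.mp this)
  haveI : NeZero ((Fintype.card G : F)) :=
    ⟨by rw [Ne, CharP.cast_eq_zero_iff F (ringChar F)]; exact hnd⟩
  haveI : NeZero ((Nat.card G : F)) := by rw [Nat.card_eq_fintype_card]; infer_instance
  haveI hss : IsSemisimpleRing (MonoidAlgebra F G) := inferInstance
  haveI : Fintype (MonoidAlgebra F G) := Fintype.ofEquiv (G →₀ F) MonoidAlgebra.coeffEquiv.symm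
  -- membership characterizations
  have hmemI : ∀ x : MonoidAlgebra F G, x ∈ Ideal.span {e} ↔ x * e = x := by
    intro x
    constructor
    · intro hx
      obtain ⟨c, hc⟩ := Ideal.mem_span_singleton'.mp hx
      rw [← hc]
      calc c * e * e = c * (e * e) := by ring
        _ = c * e := by rw [hie]
    · intro hx
      rw [← hx]
      exact Ideal.mul_mem_left _ _ (Ideal.mem_span_singleton_self e)
  have hmemJ : ∀ x : MonoidAlgebra F G, x ∈ Ideal.span {bar e} ↔ x * bar e = x := by
    intro x
    constructor
    · intro hx
      obtain ⟨c, hc⟩ := Ideal.mem_span_singleton'.mp hx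
      rw [← hc]
      calc c * bar e * bar e = c * (bar e * bar e) := by ring
        _ = c * bar e := by rw [hif]
    · intro hx
      rw [← hx]
      exact Ideal.mul_mem_left _ _ (Ideal.mem_span_singleton_self (bar e))
  have hIJ : ∀ x y : MonoidAlgebra F G,
      x ∈ Ideal.span {e} → y ∈ Ideal.span {bar e} → x * y = 0 := by
    intro x y hx hy
    rw [← (hmemI x).mp hx, ← (hmemJ y).mp hy]
    calc x * e * (y * bar e) = x * y * (e * bar e) := by ring
      _ = 0 := by rw [horth, mul_zero]
  have hbarIJ : ∀ x ∈ Ideal.span {e}, bar x ∈ Ideal.span ({bar e} :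
      Set (MonoidAlgebra F G)) := by
    intro x hx
    obtain ⟨c, hc⟩ := Ideal.mem_span_singleton'.mp hx
    rw [← hc, bar_mul']
    exact Ideal.mul_mem_left _ _ (Ideal.mem_span_singleton_self (bar e))
  have hbarJI : ∀ x ∈ Ideal.span ({bar e} : Set (MonoidAlgebra F G)),
      bar x ∈ Ideal.span ({e} : Set (MonoidAlgebra F G)) := by
    intro x hx
    obtain ⟨c, hc⟩ := Ideal.mem_span_singleton'.mp hx
    rw [← hc, bar_mul', bar_bar']
    exact Ideal.mul_mem_left _ _ (Ideal.mem_span_singleton_self e)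
  -- `FGe` is a field: every nonzero element has an inverse
  have hfield : ∀ u : MonoidAlgebra F G, u ∈ Ideal.span {e} → u ≠ 0 →
      ∃ w, w ∈ Ideal.span ({e} : Set (MonoidAlgebra F G)) ∧ u * w = e := by
    intro u hu hu0
    obtain ⟨g, hg, hspan⟩ := IsSemisimpleRing.ideal_eq_span_idempotent (Ideal.span {u})
    have hgmem : g ∈ Ideal.span ({u} : Set (MonoidAlgebra F G)) := by
      rw [hspan]; exact Ideal.mem_span_singleton_self g
    have hgI : g ∈ Ideal.span ({e} : Set (MonoidAlgebra F G)) :=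
      Ideal.span_le.mpr (Set.singleton_subset_iff.mpr hu) hgmem
    have hg0 : g ≠ 0 := by
      rintro rfl
      have hb : Ideal.span ({u} : Set (MonoidAlgebra F G)) = ⊥ := by
        rw [hspan, Ideal.span_singleton_eq_bot]
      exact hu0 (by
        have := Ideal.mem_span_singleton_self u
        rw [hb] at this
        simpa using this)
    have hge : g = e := prim_eats he hg ((hmemI g).mp hgI) hg0
    rw [hge] at hgmem
    obtain ⟨c, hc⟩ := Ideal.mem_span_singleton'.mp hgmem
    refine ⟨c * e, Ideal.mul_mem_left _ _ (Ideal.mem_span_singleton_self e), ?_⟩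
    calc u * (c * e) = c * u * e := by ring
      _ = e * e := by rw [hc]
      _ = e := hie
  have huniq : ∀ u w w' : MonoidAlgebra F G, w ∈ Ideal.span {e} → w' ∈ Ideal.span {e} →
      u * w = e → u * w' = e → w = w' := by
    intro u w w' hw hw' h1 h2
    calc w = w * e := ((hmemI w).mp hw).symm
      _ = w * (u * w') := by rw [h2]
      _ = u * w * w' := by ring
      _ = e * w' := by rw [h1]
      _ = w' * e := mul_comm _ _
      _ = w' := (hmemI w').mp hw'
  -- decomposition of elements of the sup
  have hsup : ∀ β : MonoidAlgebra F G, β ∈ Ideal.span {e} ⊔ Ideal.span {bar e} →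
      β * e + β * bar e = β := by
    intro β hβ
    obtain ⟨a, ha, b, hb, rfl⟩ := Submodule.mem_sup.mp hβ
    have hae := (hmemI a).mp ha
    have hbf := (hmemJ b).mp hb
    have h1 : a * bar e = 0 := hIJ a (bar e) ha (Ideal.mem_span_singleton_self _)
    have h2 : b * e = 0 := by
      rw [mul_comm]
      exact hIJ e b (Ideal.mem_span_singleton_self _) hb
    calc (a + b) * e + (a + b) * bar e = (a * e + b * e) + (a * bar e + b * bar e) := by ring
      _ = (a + 0) + (0 + b) := by rw [hae, hbf, h1, h2]
      _ = a + b := by ring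
  -- key consequence of the defining equation
  have hkey : ∀ β : MonoidAlgebra F G,
      β ∈ Ideal.span {e} ⊔ Ideal.span {bar e} → β * bar β = -(e + bar e) →
      (β * e) * (-(bar (β * bar e))) = e := by
    intro β hmem heq
    set u := β * e with hu_def
    set v := β * bar e with hv_def
    have hu : u ∈ Ideal.span ({e} : Set (MonoidAlgebra F G)) :=
      Ideal.mul_mem_left _ _ (Ideal.mem_span_singleton_self e)
    have hv : v ∈ Ideal.span ({bar e} : Set (MonoidAlgebra F G)) :=
      Ideal.mul_mem_left _ _ (Ideal.mem_span_singleton_self (bar e))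
    have hβ : u + v = β := hsup β hmem
    have hbu : bar u ∈ Ideal.span ({bar e} : Set (MonoidAlgebra F G)) := hbarIJ u hu
    have hbv : bar v ∈ Ideal.span ({e} : Set (MonoidAlgebra F G)) := hbarJI v hv
    have huu : u * bar u = 0 := hIJ u (bar u) hu hbu
    have hvv : v * bar v = 0 := by
      rw [mul_comm]; exact hIJ (bar v) v hbv hv
    have hexp : u * bar v + v * bar u = -(e + bar e) := by
      have : β * bar β = u * bar u + u * bar v + v * bar u + v * bar v := by
        rw [← hβ, bar_add']; ring
      rw [heq, huu, hvv] at this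
      rw [this]; ring
    -- multiply by e
    have h1 : (u * bar v) * e = u * bar v := by
      have : u * bar v ∈ Ideal.span ({e} : Set (MonoidAlgebra F G)) :=
        Ideal.mul_mem_left _ _ hbv
      exact (hmemI _).mp this
    have h2 : (v * bar u) * e = 0 := by
      have he0 : e * bar u = 0 := hIJ e (bar u) (Ideal.mem_span_singleton_self e) hbu
      calc (v * bar u) * e = v * (e * bar u) := by ring
        _ = 0 := by rw [he0, mul_zero]
    have h3 : bar e * e = 0 := by rw [mul_comm]; exact horth
    have := congrArg (· * e) hexp
    rw [add_mul, h1, h2, add_zero] at this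
    rw [neg_mul, add_mul, hie, h3, add_zero] at this
    calc u * (-(bar v)) = -(u * bar v) := by ring
      _ = -(-e) := by rw [this]
      _ = e := neg_neg e
  -- the map to nonzero elements of the ideal, and its bijectivity
  set S := {β : MonoidAlgebra F G |
      β ∈ Ideal.span {e} ⊔ Ideal.span {bar e} ∧ β * bar β = -(e + bar e)} with hS_def
  have hScard : Nat.card S =
      Nat.card {u : MonoidAlgebra F G // u ∈ Ideal.span {e} ∧ u ≠ 0} := by
    apply Nat.card_eq_of_bijective
      (fun β => (⟨β.1 * e, Ideal.mul_mem_left _ _ (Ideal.mem_span_singleton_self e), by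
        intro h0
        have := hkey β.1 β.2.1 β.2.2
        rw [h0, zero_mul] at this
        exact hne this.symm⟩ :
        {u : MonoidAlgebra F G // u ∈ Ideal.span {e} ∧ u ≠ 0}))
    constructor
    · rintro ⟨β, hβmem, hβeq⟩ ⟨β', hβ'mem, hβ'eq⟩ h
      have hval : β * e = β' * e := congrArg Subtype.val h
      have k1 := hkey β hβmem hβeq
      have k2 := hkey β' hβ'mem hβ'eq
      rw [← hval] at k2
      have hw1 : -(bar (β * bar e)) ∈ Ideal.span ({e} : Set (MonoidAlgebra F G)) :=
        neg_mem (hbarJI _ (Ideal.mul_mem_left _ _ (Ideal.mem_span_singleton_self (bar e))))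
      have hw2 : -(bar (β' * bar e)) ∈ Ideal.span ({e} : Set (MonoidAlgebra F G)) :=
        neg_mem (hbarJI _ (Ideal.mul_mem_left _ _ (Ideal.mem_span_singleton_self (bar e))))
      have hww : -(bar (β * bar e)) = -(bar (β' * bar e)) :=
        huniq (β * e) _ _ hw1 hw2 k1 k2
      have hvv : β * bar e = β' * bar e := bar_inj' (neg_injective hww)
      apply Subtype.ext
      show β = β'
      rw [← hsup β hβmem, ← hsup β' hβ'mem, hval, hvv]
    · rintro ⟨u, hu, hu0⟩
      obtain ⟨w, hw, hwinv⟩ := hfield u hu hu0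
      have hbw : bar w ∈ Ideal.span ({bar e} : Set (MonoidAlgebra F G)) := hbarIJ w hw
      have hmem : u - bar w ∈ Ideal.span {e} ⊔ Ideal.span {bar e} := by
        apply sub_mem
        · exact Submodule.mem_sup_left hu
        · exact Submodule.mem_sup_right hbw
      have huu : u * bar u = 0 := hIJ u (bar u) hu (hbarIJ u hu)
      have hww0 : bar w * w = 0 := by
        rw [mul_comm]; exact hIJ w (bar w) hw hbw
      have heq : (u - bar w) * bar (u - bar w) = -(e + bar e) := by
        have hbsub : bar (u - bar w) = bar u - w := by
          rw [sub_eq_add_neg, bar_add', bar_neg', bar_bar', ← sub_eq_add_neg]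
        rw [hbsub]
        have hexp : (u - bar w) * (bar u - w) =
            u * bar u - u * w - bar w * bar u + bar w * w := by ring
        rw [hexp, huu, hww0, hwinv, ← bar_mul']
        rw [mul_comm w u, hwinv]
        ring
      refine ⟨⟨u - bar w, hmem, heq⟩, ?_⟩
      apply Subtype.ext
      show (u - bar w) * e = u
      have h1 : bar w * e = 0 := by
        rw [mul_comm]; exact hIJ e (bar w) (Ideal.mem_span_singleton_self e) hbw
      rw [sub_mul, (hmemI u).mp hu, h1, sub_zero]
  -- counting
  rw [hScard]
  set M := Submodule.restrictScalars F (Ideal.span ({e} : Set (MonoidAlgebra F G))) with hM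
  haveI : Fintype M := Fintype.ofFinite _
  have hequiv : {u : MonoidAlgebra F G // u ∈ Ideal.span {e} ∧ u ≠ 0} ≃
      {x : M // x ≠ 0} :=
    { toFun := fun u => ⟨⟨u.1, u.2.1⟩, fun h => u.2.2 (congrArg Subtype.val h)⟩
      invFun := fun x => ⟨x.1.1, x.1.2, fun h => x.2 (Subtype.ext h)⟩
      left_inv := fun u => rfl
      right_inv := fun x => rfl }
  rw [Nat.card_congr hequiv, Nat.card_eq_fintype_card]
  have hcompl : Fintype.card {x : M // x ≠ 0} = Fintype.card M - 1 := by
    have h1 : Fintype.card {x : M // ¬ x = 0} =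
        Fintype.card M - Fintype.card {x : M // x = 0} :=
      Fintype.card_subtype_compl _
    have h2 : Fintype.card {x : M // x = 0} = 1 := Fintype.card_subtype_eq (0 : M)
    rw [h2] at h1
    exact h1
  rw [hcompl]
  congr 1
  have := Module.card_eq_pow_finrank (K := F) (V := M)
  rw [this]
  rfl

end
end
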